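/- In the random intersection graph G(n,m,F) with m = ⌊βn^α⌋ and p_i = min(γ W_i n^{-(1+α)/2}, 1), if F has finite mean and α < 1, then the degree D_i of a given vertex i converges in distribution to a point mass at 0 as n → ∞. -/

import Mathlib

open MeasureTheory ProbabilityTheory Filter Real

noncomputable section

/-- Bernoulli measure on `Bool` with success probability `p` (clamped into `[0,1]`). -/
def bern (p : ℝ) : Measure Bool :=
  (PMF.bernoulli (Real.toNNReal (min p 1))
    (Real.toNNReal_le_one.mpr (min_le_right _ _))).toMeasure

instance bern.isProbabilityMeasure (p : ℝ) : IsProbabilityMeasure (bern p) := by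
  unfold bern; infer_instance

/-- The (conditional) law of the bipartite graph `B(n,m,·)` given the group-membership
probabilities `p i` of the `n` vertices: vertex `i` is joined to each of the `m` groups
independently with probability `p i`. -/
def bipLaw (n m : ℕ) (p : Fin n → ℝ) : Measure (Fin n → Fin m → Bool) :=
  Measure.pi fun i => Measure.pi fun _ : Fin m => bern (p i)

instance bipLaw.isProbabilityMeasure (n m : ℕ) (p : Fin n → ℝ) :
    IsProbabilityMeasure (bipLaw n m p) := by
  unfold bipLaw; infer_instance

open Function Set in
theorem my_map_eval {ι : Type*} [Fintype ι] [DecidableEq ι] {α : ι → Type*}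
    [∀ i, MeasurableSpace (α i)]
    (μ : ∀ i, Measure (α i)) [∀ i, IsProbabilityMeasure (μ i)] (i : ι) :
    (Measure.pi μ).map (eval i) = μ i := by
  ext s hs
  rw [Measure.map_apply (measurable_pi_apply i) hs, Set.eval_preimage,
    Measure.pi_pi]
  rw [Finset.prod_eq_single i (fun j _ hj => by simp [Function.update_of_ne hj])
    (by simp)]
  simp

lemma bern_singleton (p : ℝ) (b : Bool) :
    bern p {b} = if b then ENNReal.ofReal (min p 1) else 1 - ENNReal.ofReal (min p 1) := by
  unfold bern
  rw [PMF.toMeasure_apply_singleton _ _ (measurableSet_singleton b), PMF.bernoulli_apply]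
  cases b
  · show ((1 - Real.toNNReal (min p 1) : NNReal) : ENNReal) = 1 - ENNReal.ofReal (min p 1)
    rw [ENNReal.coe_sub, ENNReal.coe_one]; rfl
  · rfl

lemma measurable_bern_singleton (b : Bool) : Measurable fun p : ℝ => bern p {b} := by
  simp only [bern_singleton]
  have h : Measurable fun p : ℝ => ENNReal.ofReal (min p 1) :=
    ENNReal.measurable_ofReal.comp (measurable_id.min measurable_const)
  cases b
  · simpa using h.const_sub 1
  · simpa using h

lemma bipLaw_singleton (n m : ℕ) (p : Fin n → ℝ) (B : Fin n → Fin m → Bool) :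
    bipLaw n m p {B} = ∏ i, ∏ a, bern (p i) {B i a} := by
  unfold bipLaw
  rw [← Set.univ_pi_singleton B, Measure.pi_pi]
  refine Finset.prod_congr rfl fun i _ => ?_
  rw [← Set.univ_pi_singleton (B i), Measure.pi_pi]

lemma measurable_bipLaw_apply (n m : ℕ) (S : Set (Fin n → Fin m → Bool)) :
    Measurable fun p : Fin n → ℝ => ((bipLaw n m p) S).toReal := by
  have hS : ∀ p : Fin n → ℝ, bipLaw n m p S
      = ∑ B ∈ (Set.toFinite S).toFinset, bipLaw n m p {B} := by
    intro p
    rw [show S = ⋃ B ∈ (Set.toFinite S).toFinset, ({B} : Set _) by simp,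
      measure_biUnion_finset (fun B _ C _ hBC => by simp [Set.disjoint_singleton, hBC])
        (fun B _ => measurableSet_singleton B)]
    exact Finset.sum_congr (by ext; simp) fun _ _ => rfl
  simp only [hS, bipLaw_singleton]
  apply ENNReal.measurable_toReal.comp
  apply Finset.measurable_sum
  intro B _
  apply Finset.measurable_prod
  intro i _
  apply Finset.measurable_prod
  intro a _
  exact (measurable_bern_singleton (B i a)).comp (measurable_pi_apply i)


/-- The number of groups, `m = ⌊β n^α⌋`. -/
def numGroups (β α : ℝ) (n : ℕ) : ℕ := ⌊β * (n : ℝ) ^ α⌋₊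

/-- The group-membership probability `p_i = min(γ w n^{-(1+α)/2}, 1)` of a vertex
with weight `w`. -/
def pw (γ α : ℝ) (n : ℕ) (w : ℝ) : ℝ := min (γ * w * (n : ℝ) ^ (-(1 + α) / 2)) 1

/-- Two distinct vertices are adjacent in the random intersection graph iff they share
at least one group in the bipartite graph. -/
def Adj {n m : ℕ} (B : Fin n → Fin m → Bool) (i j : Fin n) : Prop :=
  ∃ a : Fin m, B i a ∧ B j a

/-- The degree of vertex `i` in the random intersection graph determined by the
bipartite graph `B`. -/
def deg {n m : ℕ} (B : Fin n → Fin m → Bool) (i : Fin n) : ℕ :=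
  Set.ncard {j | j ≠ i ∧ Adj B i j}

open Function in
lemma bipLaw_cyl_bound (n m : ℕ) [NeZero n] (p : Fin n → ℝ) :
    bipLaw n m p {B | ∃ a : Fin m, B 0 a = true} ≤ m * ENNReal.ofReal (p 0) := by
  have hT : {B : Fin n → Fin m → Bool | ∃ a, B 0 a = true}
      = eval 0 ⁻¹' {f : Fin m → Bool | ∃ a, f a = true} := rfl
  have hTm : MeasurableSet {f : Fin m → Bool | ∃ a, f a = true} :=
    (Set.to_countable _).measurableSet
  rw [hT, ← Measure.map_apply (measurable_pi_apply 0) hTm]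
  unfold bipLaw
  rw [my_map_eval]
  calc (Measure.pi fun _ : Fin m => bern (p 0)) {f | ∃ a, f a = true}
      ≤ ∑ a ∈ Finset.univ, (Measure.pi fun _ : Fin m => bern (p 0)) (eval a ⁻¹' {true}) := by
        refine le_trans (measure_mono ?_) (measure_biUnion_finset_le Finset.univ _)
        rintro f ⟨a, ha⟩
        exact Set.mem_iUnion₂.2 ⟨a, Finset.mem_univ a, ha⟩
    _ = ∑ _a ∈ (Finset.univ : Finset (Fin m)), bern (p 0) {true} := by
        refine Finset.sum_congr rfl fun a _ => ?_
        rw [← Measure.map_apply (measurable_pi_apply a) (measurableSet_singleton true),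
          my_map_eval]
    _ ≤ m * ENNReal.ofReal (p 0) := by
        rw [Finset.sum_const, Finset.card_univ, Fintype.card_fin, bern_singleton,
          if_pos rfl, nsmul_eq_mul]
        exact mul_le_mul_right (ENNReal.ofReal_le_ofReal (min_le_left _ _)) _

/-- The distribution of the degree of vertex `0` in `G(n,m,F)`: the probability that
the degree equals `k`, all the weights being i.i.d. with law `F`. -/
def degPMF (α β γ : ℝ) (F : Measure ℝ) (n : ℕ) (k : ℕ) : ℝ :=
  if h : n ≠ 0 then
    haveI : NeZero n := ⟨h⟩
    ∫ v : Fin n → ℝ,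
      ((bipLaw n (numGroups β α n) fun i => pw γ α n (v i)) {B | deg B 0 = k}).toReal
      ∂ Measure.pi fun _ : Fin n => F
  else 0

section perN
variable (α β γ : ℝ) (F : Measure ℝ) [IsProbabilityMeasure F]
  (n : ℕ) [NeZero n]

open Function

lemma degPMF_eq (k : ℕ) : degPMF α β γ F n k =
    ∫ v : Fin n → ℝ,
      ((bipLaw n (numGroups β α n) fun i => pw γ α n (v i)) {B | deg B 0 = k}).toReal
      ∂ Measure.pi fun _ : Fin n => F := by
  rw [degPMF, dif_pos (NeZero.ne n)]

lemma degPMF_nonneg (k : ℕ) : 0 ≤ degPMF α β γ F n k := by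
  rw [degPMF_eq]
  exact integral_nonneg fun v => ENNReal.toReal_nonneg

lemma hg_le_one (k : ℕ) (v : Fin n → ℝ) :
    ((bipLaw n (numGroups β α n) fun i => pw γ α n (v i)) {B | deg B 0 = k}).toReal ≤ 1 := by
  have h := prob_le_one (μ := bipLaw n (numGroups β α n) fun i => pw γ α n (v i))
    (s := {B | deg B 0 = k})
  simpa using ENNReal.toReal_mono ENNReal.one_ne_top h

lemma degPMF_le_one (k : ℕ) : degPMF α β γ F n k ≤ 1 := by
  rw [degPMF_eq]
  calc (∫ v : Fin n → ℝ, ((bipLaw n (numGroups β α n) fun i => pw γ α n (v i))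
        {B | deg B 0 = k}).toReal ∂ (Measure.pi fun _ : Fin n => F))
      ≤ ∫ _v : Fin n → ℝ, (1 : ℝ) ∂ (Measure.pi fun _ : Fin n => F) :=
        integral_mono_of_nonneg (Filter.Eventually.of_forall fun v => ENNReal.toReal_nonneg)
          (integrable_const 1)
          (Filter.Eventually.of_forall fun v => hg_le_one α β γ n k v)
    _ = 1 := by simp

end perN

section key
variable {α β γ : ℝ} {F : Measure ℝ} [IsProbabilityMeasure F] {n : ℕ} [NeZero n]

open Function

lemma deg_ne_zero_sub {m : ℕ} (B : Fin n → Fin m → Bool) (h : deg B 0 ≠ 0) :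
    ∃ a, B 0 a = true := by
  obtain ⟨j, hj⟩ := Set.nonempty_of_ncard_ne_zero h
  obtain ⟨a, h0a, _⟩ := hj.2
  exact ⟨a, h0a⟩

lemma degPMF_key (hγ : 0 < γ)
    (hFpos : F (Set.Iic 0) = 0)
    (hFint : Integrable (fun x => x) F) (hFmean : ∫ x, x ∂F = 1) :
    (∀ k : ℕ, k ≠ 0 → degPMF α β γ F n k ≤
      (numGroups β α n : ℝ) * (γ * (n : ℝ) ^ (-(1 + α) / 2))) ∧
    1 - (numGroups β α n : ℝ) * (γ * (n : ℝ) ^ (-(1 + α) / 2)) ≤ degPMF α β γ F n 0 := by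
  set m := numGroups β α n with hm
  set μ : Measure (Fin n → ℝ) := Measure.pi fun _ : Fin n => F with hμ
  set c : ℝ := (m : ℝ) * (γ * (n : ℝ) ^ (-(1 + α) / 2)) with hc
  -- a.e. positivity of the weight of vertex 0
  have hae : ∀ᵐ v ∂μ, 0 < v 0 := by
    rw [ae_iff]
    have h0 : μ (eval 0 ⁻¹' Set.Iic 0) = 0 := Measure.pi_eval_preimage_null _ hFpos
    convert h0 using 2
    ext v; simp [not_lt, Set.mem_preimage]
  -- the marginal of coordinate 0
  have hmap : μ.map (eval 0) = F := my_map_eval _ 0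
  have hintv : Integrable (fun v : Fin n → ℝ => v 0) μ := by
    have h : Integrable (fun x : ℝ => x) (μ.map (eval 0)) := by rw [hmap]; exact hFint
    exact (integrable_map_measure measurable_id.aestronglyMeasurable
      (measurable_pi_apply 0).aemeasurable).mp h
  have hmean : ∫ v, v 0 ∂μ = 1 := by
    have h : ∫ x, x ∂(μ.map (eval 0)) = ∫ v, v 0 ∂μ :=
      integral_map (measurable_pi_apply 0).aemeasurable measurable_id.aestronglyMeasurable
    rw [hmap] at h
    rw [← h, hFmean]
  have hintc : Integrable (fun v : Fin n → ℝ => c * v 0) μ := hintv.const_mul c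
  have hic : ∫ v, c * v 0 ∂μ = c := by rw [integral_const_mul, hmean, mul_one]
  -- the core pointwise bound
  have hcore : ∀ v : Fin n → ℝ, 0 < v 0 → ∀ S : Set (Fin n → Fin m → Bool),
      S ⊆ {B | ∃ a, B 0 a = true} →
      ((bipLaw n m fun i => pw γ α n (v i)) S).toReal ≤ c * v 0 := by
    intro v hv S hSsub
    have hpw0 : 0 ≤ pw γ α n (v 0) :=
      le_min (by positivity) zero_le_one
    have h1 : (bipLaw n m fun i => pw γ α n (v i)) S
        ≤ (m : ENNReal) * ENNReal.ofReal (pw γ α n (v 0)) :=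
      le_trans (measure_mono hSsub) (bipLaw_cyl_bound n m _)
    have h2 := ENNReal.toReal_mono
      (ENNReal.mul_ne_top (ENNReal.natCast_ne_top m) ENNReal.ofReal_ne_top) h1
    rw [ENNReal.toReal_mul, ENNReal.toReal_natCast, ENNReal.toReal_ofReal hpw0] at h2
    refine h2.trans ?_
    have hle : pw γ α n (v 0) ≤ γ * v 0 * (n : ℝ) ^ (-(1 + α) / 2) := min_le_left _ _
    calc (m : ℝ) * pw γ α n (v 0) ≤ (m : ℝ) * (γ * v 0 * (n : ℝ) ^ (-(1 + α) / 2)) :=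
          mul_le_mul_of_nonneg_left hle (Nat.cast_nonneg m)
      _ = c * v 0 := by rw [hc]; ring
  constructor
  · intro k hk
    rw [degPMF_eq]
    refine le_trans (integral_mono_of_nonneg
      (Eventually.of_forall fun v => ENNReal.toReal_nonneg) hintc ?_) (le_of_eq hic)
    filter_upwards [hae] with v hv
    exact hcore v hv _ fun B hB => deg_ne_zero_sub B (by rw [Set.mem_setOf_eq] at hB; omega)
  · -- k = 0 case
    have hpwv : Measurable fun v : Fin n → ℝ => (fun i => pw γ α n (v i)) := by
      apply measurable_pi_lambda
      intro i
      exact (((measurable_id.const_mul γ).mul_const _).min measurable_const).comp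
        (measurable_pi_apply i)
    set g0 : (Fin n → ℝ) → ℝ :=
      fun v => ((bipLaw n m fun i => pw γ α n (v i)) {B | deg B 0 = 0}).toReal with hg0
    have hg0meas : AEStronglyMeasurable g0 μ :=
      ((measurable_bipLaw_apply n m _).comp hpwv).aestronglyMeasurable
    have hg0int : Integrable g0 μ := by
      refine (integrable_const (1 : ℝ)).mono' hg0meas ?_
      refine Eventually.of_forall fun v => ?_
      rw [Real.norm_eq_abs, abs_of_nonneg ENNReal.toReal_nonneg]
      exact hg_le_one α β γ n 0 v
    have hSm : MeasurableSet {B : Fin n → Fin m → Bool | deg B 0 = 0} :=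
      (Set.to_countable _).measurableSet
    have hcompl : ∀ v : Fin n → ℝ,
        1 - g0 v = ((bipLaw n m fun i => pw γ α n (v i))
          {B : Fin n → Fin m → Bool | deg B 0 = 0}ᶜ).toReal := by
      intro v
      rw [prob_compl_eq_one_sub hSm,
        ENNReal.toReal_sub_of_le prob_le_one ENNReal.one_ne_top, ENNReal.toReal_one]
    have hkey : ∫ v, (1 - g0 v) ∂μ ≤ c := by
      refine le_trans (integral_mono_of_nonneg ?_ hintc ?_) (le_of_eq hic)
      · exact Eventually.of_forall fun v => sub_nonneg.2 (hg_le_one α β γ n 0 v)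
      · filter_upwards [hae] with v hv
        rw [hcompl v]
        exact hcore v hv _ fun B hB => deg_ne_zero_sub B hB
    have hsplit : ∫ v, (1 - g0 v) ∂μ = 1 - ∫ v, g0 v ∂μ := by
      rw [integral_sub (integrable_const 1) hg0int]
      simp
    rw [degPMF_eq]
    have : degPMF α β γ F n 0 = ∫ v, g0 v ∂μ := degPMF_eq α β γ F n 0
    rw [hsplit] at hkey
    linarith [hkey]

end key


lemma tendsto_C (α β γ : ℝ) (hα1 : α < 1) (hβ : 0 < β) (hγ : 0 < γ) :
    Filter.Tendsto (fun n : ℕ => (numGroups β α n : ℝ) * (γ * (n : ℝ) ^ (-(1 + α) / 2)))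
      Filter.atTop (nhds 0) := by
  have hD : Filter.Tendsto (fun n : ℕ => β * γ * (n : ℝ) ^ ((α - 1) / 2))
      Filter.atTop (nhds 0) := by
    have h1 : Filter.Tendsto (fun x : ℝ => x ^ (-((1 - α) / 2))) Filter.atTop (nhds 0) :=
      tendsto_rpow_neg_atTop (by linarith)
    have h2 := (h1.comp (tendsto_natCast_atTop_atTop (R := ℝ))).const_mul (β * γ)
    rw [mul_zero] at h2
    convert h2 using 2 with n
    simp only [Function.comp_apply]
    ring_nf
  apply squeeze_zero'
  · exact Filter.Eventually.of_forall fun n => by positivity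
  · filter_upwards [Filter.eventually_ge_atTop 1] with n hn
    have hn0 : (0 : ℝ) < (n : ℝ) := by exact_mod_cast hn
    have hfl : (numGroups β α n : ℝ) ≤ β * (n : ℝ) ^ α :=
      Nat.floor_le (by positivity)
    calc (numGroups β α n : ℝ) * (γ * (n : ℝ) ^ (-(1 + α) / 2))
        ≤ β * (n : ℝ) ^ α * (γ * (n : ℝ) ^ (-(1 + α) / 2)) := by
          apply mul_le_mul_of_nonneg_right hfl (by positivity)
      _ = β * γ * ((n : ℝ) ^ α * (n : ℝ) ^ (-(1 + α) / 2)) := by ring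
      _ = β * γ * (n : ℝ) ^ ((α - 1) / 2) := by
          rw [← Real.rpow_add hn0]; ring_nf
  · exact hD


/-- Theorem 1(a): in the random intersection graph `G(n,m,F)` with `m = ⌊β n^α⌋` and
`p_i = min(γ W_i n^{-(1+α)/2}, 1)`, if `F` has finite mean and `α < 1`, then the degree
of a given vertex converges in distribution to a point mass at `0` as `n → ∞`. -/
theorem degree_point_mass (α β γ : ℝ) (hα : 0 < α) (hα1 : α < 1) (hβ : 0 < β) (hγ : 0 < γ)
    (F : Measure ℝ) [IsProbabilityMeasure F]
    (hFpos : F (Set.Iic 0) = 0)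
    (hFint : Integrable (fun x => x) F) (hFmean : ∫ x, x ∂F = 1) :
    ∀ k : ℕ,
      Tendsto (fun n => degPMF α β γ F n k) atTop
        (nhds (if k = 0 then (1 : ℝ) else 0)) := by
  intro k
  set C : ℕ → ℝ := fun n => (numGroups β α n : ℝ) * (γ * (n : ℝ) ^ (-(1 + α) / 2)) with hC
  have hCt := tendsto_C α β γ hα1 hβ hγ
  by_cases hk : k = 0
  · subst hk
    rw [if_pos rfl]
    have hlow : Tendsto (fun n : ℕ => 1 - C n) atTop (nhds 1) := by
      have h' := (tendsto_const_nhds (f := Filter.atTop (α := ℕ)) (x := (1:ℝ))).sub hCt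
      rw [sub_zero] at h'
      exact h'
    refine tendsto_of_tendsto_of_tendsto_of_le_of_le' hlow tendsto_const_nhds ?_ ?_
    · filter_upwards [Filter.eventually_ge_atTop 1] with n hn
      haveI : NeZero n := ⟨by omega⟩
      exact (degPMF_key (α := α) (β := β) (γ := γ) (F := F) (n := n)
        hγ hFpos hFint hFmean).2
    · filter_upwards [Filter.eventually_ge_atTop 1] with n hn
      haveI : NeZero n := ⟨by omega⟩
      exact degPMF_le_one α β γ F n 0
  · rw [if_neg hk]
    apply squeeze_zero' ?_ ?_ hCt
    · filter_upwards [Filter.eventually_ge_atTop 1] with n hn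
      haveI : NeZero n := ⟨by omega⟩
      exact degPMF_nonneg α β γ F n k
    · filter_upwards [Filter.eventually_ge_atTop 1] with n hn
      haveI : NeZero n := ⟨by omega⟩
      exact (degPMF_key (α := α) (β := β) (γ := γ) (F := F) (n := n)
        hγ hFpos hFint hFmean).1 k hk
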